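/- If G is a disconnected graph that is minor minimal incompletely apex, then G is the disjoint union of K_1 with either K_5 or K_{3,3}. -/

import Mathlib

open SimpleGraph

def K5 : SimpleGraph (Fin 5) := ⊤

def K33 : SimpleGraph (Fin 3 ⊕ Fin 3) := completeBipartiteGraph (Fin 3) (Fin 3)

/-- `H` is a minor of `G`: branch-set (model) definition. -/
def IsMinor {W V : Type} (H : SimpleGraph W) (G : SimpleGraph V) : Prop :=
  ∃ f : W → Set V,
    (∀ w, (f w).Nonempty) ∧
    (∀ w, (G.induce (f w)).Connected) ∧
    (Pairwise fun w₁ w₂ => Disjoint (f w₁) (f w₂)) ∧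
    (∀ w₁ w₂, H.Adj w₁ w₂ → ∃ x ∈ f w₁, ∃ y ∈ f w₂, G.Adj x y)

/-- Planarity, via Wagner's theorem: no `K₅` minor and no `K₃,₃` minor. -/
def Planar {V : Type} (G : SimpleGraph V) : Prop :=
  ¬ IsMinor K5 G ∧ ¬ IsMinor K33 G

def ProperMinor {W V : Type} (H : SimpleGraph W) (G : SimpleGraph V) : Prop :=
  IsMinor H G ∧ ¬ IsMinor G H

def MinorMinimal (P : {V : Type} → SimpleGraph V → Prop) {V : Type} (G : SimpleGraph V) : Prop :=
  P G ∧ ∀ (W : Type) (H : SimpleGraph W), ProperMinor H G → ¬ P H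

/-- `G` together with the extra edge `uv`. -/
def AddEdge {V : Type} (G : SimpleGraph V) (u v : V) : SimpleGraph V :=
  G ⊔ fromEdgeSet {s(u, v)}

/-- `G - v`. -/
def DeleteVert {V : Type} (G : SimpleGraph V) (v : V) :=
  G.induce {u | u ≠ v}

/-- Disjoint union of graphs. -/
def DisjUnion {α β : Type} (G : SimpleGraph α) (H : SimpleGraph β) : SimpleGraph (α ⊕ β) :=
  (G.map Sum.inl) ⊔ (H.map Sum.inr)

/-- `K₂ ∪̇ G`: a `K₂` glued to `G` at the vertex `v` (a pendant vertex). -/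
def Pendant {V : Type} (G : SimpleGraph V) (v : V) : SimpleGraph (Option V) :=
  (G.map some) ⊔ fromEdgeSet {s(none, some v)}

/-- The result of subdividing the edge `uv` of `G`, the new vertex being `none`. -/
def SubdivideEdge {V : Type} (G : SimpleGraph V) (u v : V) : SimpleGraph (Option V) :=
  ((G.deleteEdges {s(u, v)}).map some) ⊔
    fromEdgeSet {s(none, some u), s(none, some v)}

/-- The contraction `G/uv` (realized on the same vertex set: `v` is absorbed into `u`
and left as an isolated vertex, which does not affect planarity). -/
def ContractEdge {V : Type} (G : SimpleGraph V) (u v : V) : SimpleGraph V where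
  Adj a b := a ≠ b ∧ ∃ x y, G.Adj x y ∧
    ((x = v ∧ a = u) ∨ (x ≠ v ∧ a = x)) ∧ ((y = v ∧ b = u) ∨ (y ≠ v ∧ b = y))
  symm := ⟨by
    rintro a b ⟨hab, x, y, hxy, hx, hy⟩
    exact ⟨hab.symm, y, x, hxy.symm, hy, hx⟩⟩
  loopless := ⟨by rintro a ⟨h, -⟩; exact h rfl⟩

/-- `κ(G) ≥ k`: more than `k` vertices and no cut set of fewer than `k` vertices. -/
def VertexConnAtLeast {V : Type} [Fintype V] (G : SimpleGraph V) (k : ℕ) : Prop :=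
  k < Fintype.card V ∧
    ∀ U : Finset V, U.card < k → (G.induce ((↑U : Set V)ᶜ)).Connected

def K5e : SimpleGraph (Fin 5) := K5.deleteEdges {s(0, 1)}

def K33e : SimpleGraph (Fin 3 ⊕ Fin 3) := K33.deleteEdges {s(Sum.inl 0, Sum.inr 0)}

def K2 : SimpleGraph (Fin 2) := ⊤

/-- A planar graph is maximally planar (equivalently, a plane triangulation)
if adding any edge between nonadjacent vertices destroys planarity. -/
def MaximalPlanar {V : Type} (G : SimpleGraph V) : Prop :=
  Planar G ∧ ∀ u v : V, u ≠ v → ¬ G.Adj u v → ¬ Planar (AddEdge G u v)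

/-- Almost nonplanar. -/
def AN {V : Type} (G : SimpleGraph V) : Prop :=
  Planar G ∧ ∃ u v : V, u ≠ v ∧ ¬ G.Adj u v ∧ ¬ Planar (AddEdge G u v)

/-- Completely almost nonplanar. -/
def CAN {V : Type} (G : SimpleGraph V) : Prop :=
  Planar G ∧ (∃ u v : V, u ≠ v ∧ ¬ G.Adj u v) ∧
    ∀ u v : V, u ≠ v → ¬ G.Adj u v → ¬ Planar (AddEdge G u v)

/-- Completely apex: every vertex-deleted subgraph is planar. -/
def CompletelyApex {V : Type} (G : SimpleGraph V) : Prop :=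
  ∀ v : V, Planar (DeleteVert G v)

/-- Incompletely apex. -/
def IA {V : Type} (G : SimpleGraph V) : Prop :=
  ∃ v : V, ¬ Planar (DeleteVert G v)

/-- Incompletely edge apex. -/
def IE {V : Type} (G : SimpleGraph V) : Prop :=
  ∃ e ∈ G.edgeSet, ¬ Planar (G.deleteEdges {e})

/-- Incompletely contraction apex. -/
def IC {V : Type} (G : SimpleGraph V) : Prop :=
  ∃ u v : V, G.Adj u v ∧ ¬ Planar (ContractEdge G u v)

/-- Not apex. -/
def NA {V : Type} (G : SimpleGraph V) : Prop :=
  ∀ v : V, ¬ Planar (DeleteVert G v)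

/-- Not edge apex. -/
def NE {V : Type} (G : SimpleGraph V) : Prop :=
  ∀ e ∈ G.edgeSet, ¬ Planar (G.deleteEdges {e})

/-- Edge apex: some edge deletion (or the graph itself) is planar. -/
def EdgeApex {V : Type} (G : SimpleGraph V) : Prop :=
  Planar G ∨ ∃ e ∈ G.edgeSet, Planar (G.deleteEdges {e})

section Aux

open Function Set

lemma connected_of_subsingleton {α : Type} (G : SimpleGraph α) [Subsingleton α] [Nonempty α] :
    G.Connected := by
  constructor
  intro a b
  rw [Subsingleton.elim a b]

lemma isMinor_of_embedding {W V : Type} {H : SimpleGraph W} {G : SimpleGraph V}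
    (f : W → V) (hinj : Function.Injective f)
    (hadj : ∀ a b, H.Adj a b → G.Adj (f a) (f b)) : IsMinor H G := by
  refine ⟨fun w => {f w}, fun w => ⟨f w, rfl⟩, fun w => ?_, ?_, ?_⟩
  · exact connected_of_subsingleton _
  · intro a b hab
    exact Set.disjoint_singleton.mpr (fun h => hab (hinj h))
  · intro a b h
    exact ⟨f a, rfl, f b, rfl, hadj a b h⟩

lemma connected_image {V : Type} (G : SimpleGraph V) (T : Set V) (s : Set T)
    (h : ((G.induce T).induce s).Connected) : (G.induce (Subtype.val '' s)).Connected := by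
  have e : ((G.induce T).induce s) ≃g (G.induce (Subtype.val '' s)) := by
    refine ⟨Equiv.Set.image Subtype.val s Subtype.val_injective, ?_⟩
    intro a b
    simp [Equiv.Set.image_apply]
  exact e.connected_iff.mp h

lemma disjUnion_adj {α β : Type} (A : SimpleGraph α) (B : SimpleGraph β)
    (x y : α ⊕ β) : (DisjUnion A B).Adj x y ↔
      (∃ a b, A.Adj a b ∧ x = Sum.inl a ∧ y = Sum.inl b) ∨
      (∃ a b, B.Adj a b ∧ x = Sum.inr a ∧ y = Sum.inr b) := by
  simp only [DisjUnion, SimpleGraph.sup_adj, SimpleGraph.map_adj,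
    Function.Embedding.coeFn_mk]
  constructor
  · rintro (⟨-, a, b, h, ha, hb⟩ | ⟨-, a, b, h, ha, hb⟩)
    · exact Or.inl ⟨a, b, h, ha.symm, hb.symm⟩
    · exact Or.inr ⟨a, b, h, ha.symm, hb.symm⟩
  · rintro (⟨a, b, h, ha, hb⟩ | ⟨a, b, h, ha, hb⟩)
    · exact Or.inl ⟨by subst ha hb; simpa using h.ne, a, b, h, ha.symm, hb.symm⟩
    · exact Or.inr ⟨by subst ha hb; simpa using h.ne, a, b, h, ha.symm, hb.symm⟩

lemma disj_minor {V : Type} (G : SimpleGraph V) (v : V) {W : Type} {H : SimpleGraph W}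
    (h : IsMinor H (DeleteVert G v)) :
    IsMinor (DisjUnion (⊥ : SimpleGraph (Fin 1)) H) G := by
  obtain ⟨f, hne, hconn, hdisj, hadj⟩ := h
  refine ⟨fun w => Sum.elim (fun _ => ({v} : Set V)) (fun w => Subtype.val '' f w) w,
    ?_, ?_, ?_, ?_⟩
  · rintro (a | w)
    · exact ⟨v, rfl⟩
    · obtain ⟨x, hx⟩ := hne w
      exact ⟨x.1, ⟨x, hx, rfl⟩⟩
  · rintro (a | w)
    · simp only [Sum.elim_inl]
      exact connected_of_subsingleton _
    · simp only [Sum.elim_inr]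
      exact connected_image G _ _ (hconn w)
  · rintro (a | w) (b | w') hne'
    · exact absurd (congrArg Sum.inl (Subsingleton.elim a b)) hne'
    · simp only [Sum.elim_inl, Sum.elim_inr]
      rw [Set.disjoint_left]
      rintro x rfl ⟨y, _, hy⟩
      exact y.2 hy
    · simp only [Sum.elim_inl, Sum.elim_inr]
      rw [Set.disjoint_left]
      rintro x ⟨y, _, hy⟩ hx
      exact y.2 (hy.trans hx)
    · simp only [Sum.elim_inr]
      have hww : w ≠ w' := fun h => hne' (congrArg Sum.inr h)
      exact (Set.disjoint_image_iff Subtype.val_injective).mpr (hdisj hww)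
  · intro w₁ w₂ hA
    rw [disjUnion_adj] at hA
    rcases hA with ⟨a, b, h, _, _⟩ | ⟨a, b, h, rfl, rfl⟩
    · exact absurd h (by simp)
    · obtain ⟨x, hx, y, hy, hxy⟩ := hadj a b h
      exact ⟨x.1, ⟨x, hx, rfl⟩, y.1, ⟨y, hy, rfl⟩, hxy⟩

lemma card_le_of_isMinor {W V : Type} [Fintype W] [Fintype V] {H : SimpleGraph W}
    {G : SimpleGraph V} (h : IsMinor H G) : Fintype.card W ≤ Fintype.card V := by
  obtain ⟨f, hne, -, hdisj, -⟩ := h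
  choose r hr using hne
  refine Fintype.card_le_of_injective r (fun a b hab => ?_)
  by_contra hne'
  exact Set.disjoint_left.mp (hdisj hne') (hr a) (hab ▸ hr b)

lemma hom_of_isMinor_card_eq {W V : Type} [Fintype W] [Fintype V] {H : SimpleGraph W}
    {G : SimpleGraph V} (h : IsMinor H G) (hcard : Fintype.card W = Fintype.card V) :
    ∃ r : W → V, Function.Bijective r ∧ ∀ a b, H.Adj a b → G.Adj (r a) (r b) := by
  obtain ⟨f, hne, -, hdisj, hadj⟩ := h
  choose r hr using hne
  have hinj : Function.Injective r := by
    intro a b hab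
    by_contra hne'
    exact Set.disjoint_left.mp (hdisj hne') (hr a) (hab ▸ hr b)
  have hbij : Function.Bijective r := (Fintype.bijective_iff_injective_and_card r).mpr ⟨hinj, hcard⟩
  have hsing : ∀ w x, x ∈ f w → x = r w := by
    intro w x hx
    obtain ⟨w', rfl⟩ := hbij.2 x
    have hww : w' = w := by
      by_contra hne'
      exact Set.disjoint_left.mp (hdisj (Ne.symm hne')) hx (hr w')
    rw [hww]
  refine ⟨r, hbij, fun a b hab => ?_⟩
  obtain ⟨x, hx, y, hy, hxy⟩ := hadj a b hab
  rwa [hsing a x hx, hsing b y hy] at hxy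

lemma iso_of_mutual {W V : Type} [Fintype V] {H : SimpleGraph W} {G : SimpleGraph V}
    (r : W → V) (hr : Function.Bijective r) (hrh : ∀ a b, H.Adj a b → G.Adj (r a) (r b))
    (s : V → W) (hs : Function.Bijective s) (hsh : ∀ a b, G.Adj a b → H.Adj (s a) (s b)) :
    Nonempty (G ≃g H) := by
  classical
  let p : Equiv.Perm V := Equiv.ofBijective (fun x => r (s x)) (hr.comp hs)
  have hp : ∀ a b, G.Adj a b → G.Adj (p a) (p b) := fun a b h => hrh _ _ (hsh _ _ h)
  have hpn : ∀ n a b, G.Adj a b → G.Adj ((p ^ n) a) ((p ^ n) b) := by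
    intro n
    induction n with
    | zero => intro a b h; simpa using h
    | succ k ih =>
      intro a b h
      have h2 := ih (p a) (p b) (hp a b h)
      have e1 : (p ^ k) (p a) = (p ^ (k + 1)) a := by
        rw [pow_succ]; rfl
      have e2 : (p ^ k) (p b) = (p ^ (k + 1)) b := by
        rw [pow_succ]; rfl
      rwa [e1, e2] at h2
  have key : ∀ a b, G.Adj (p a) (p b) → G.Adj a b := by
    intro a b h
    have hpos : 0 < orderOf p := orderOf_pos p
    have h2 := hpn (orderOf p - 1) (p a) (p b) h
    have e : ∀ x : V, (p ^ (orderOf p - 1)) (p x) = x := by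
      intro x
      have : (p ^ (orderOf p - 1)) (p x) = (p ^ (orderOf p - 1 + 1)) x := by
        rw [pow_succ]; rfl
      rw [this, Nat.sub_add_cancel hpos, pow_orderOf_eq_one]; rfl
    rwa [e a, e b] at h2
  refine ⟨⟨Equiv.ofBijective s hs, ?_⟩⟩
  intro a b
  constructor
  · intro h
    exact key a b (hrh _ _ h)
  · exact hsh a b

lemma embed_delete {W : Type} (H : SimpleGraph W) :
    IsMinor H (DeleteVert (DisjUnion (⊥ : SimpleGraph (Fin 1)) H) (Sum.inl 0)) := by
  refine isMinor_of_embedding (fun w => ⟨Sum.inr w, by simp [Set.mem_setOf_eq]⟩) ?_ ?_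
  · intro a b hab
    simpa using hab
  · intro a b hab
    show (DisjUnion (⊥ : SimpleGraph (Fin 1)) H).Adj (Sum.inr a) (Sum.inr b)
    rw [disjUnion_adj]
    exact Or.inr ⟨a, b, hab, rfl, rfl⟩

lemma IA_disjK5 : IA (DisjUnion (⊥ : SimpleGraph (Fin 1)) K5) :=
  ⟨Sum.inl 0, fun hpl => hpl.1 (embed_delete K5)⟩

lemma IA_disjK33 : IA (DisjUnion (⊥ : SimpleGraph (Fin 1)) K33) :=
  ⟨Sum.inl 0, fun hpl => hpl.2 (embed_delete K33)⟩

end Aux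

theorem stmt_5 {V : Type} [Fintype V] (G : SimpleGraph V)
    (hdisc : ¬ G.Connected) (hmm : MinorMinimal (fun {_} H => IA H) G) :
    Nonempty (G ≃g DisjUnion (⊥ : SimpleGraph (Fin 1)) K5) ∨
    Nonempty (G ≃g DisjUnion (⊥ : SimpleGraph (Fin 1)) K33) := by
  classical
  obtain ⟨hIA, hmin⟩ := hmm
  obtain ⟨v, hv⟩ := hIA
  have hK : IsMinor K5 (DeleteVert G v) ∨ IsMinor K33 (DeleteVert G v) := by
    by_contra h
    push_neg at h
    exact hv ⟨h.1, h.2⟩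
  have main : ∀ {W : Type} [Fintype W] (H : SimpleGraph W),
      IsMinor H (DeleteVert G v) → IA (DisjUnion (⊥ : SimpleGraph (Fin 1)) H) →
      Nonempty (G ≃g DisjUnion (⊥ : SimpleGraph (Fin 1)) H) := by
    intro W _ H hm hia
    have m1 : IsMinor (DisjUnion (⊥ : SimpleGraph (Fin 1)) H) G := disj_minor G v hm
    have m2 : IsMinor G (DisjUnion (⊥ : SimpleGraph (Fin 1)) H) := by
      by_contra hm2
      exact hmin _ _ ⟨m1, hm2⟩ hia
    have hcard : Fintype.card (Fin 1 ⊕ W) = Fintype.card V :=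
      le_antisymm (card_le_of_isMinor m1) (card_le_of_isMinor m2)
    obtain ⟨r, hr, hrh⟩ := hom_of_isMinor_card_eq m1 hcard
    obtain ⟨s, hs, hsh⟩ := hom_of_isMinor_card_eq m2 hcard.symm
    exact iso_of_mutual r hr hrh s hs hsh
  rcases hK with h5 | h33
  · exact Or.inl (main K5 h5 IA_disjK5)
  · exact Or.inr (main K33 h33 IA_disjK33)
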